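/- Let T^π_k be the k-persistent Bellman expectation operator and T*_k the k-persistent Bellman optimal operator on a finite MDP, and suppose π^* is greedy w.r.t. Q*_k (the fixed point of T*_k) while π^(J) is greedy w.r.t. Q^(J). Then Q*_k − Q_k^{π^(J)} ≤ γ^k (Id − γ^k P_k^{π^(J)})^{-1} (P_k^{π*_k} − P_k^{π^(J)}) (Q*_k − Q^(J)) pointwise, where Q_k^{π^(J)} is the fixed point of T_k^{π^(J)}. -/

import Mathlib

theorem stmt_17 {S A : Type*} [Fintype S] [Fintype A] [Nonempty A]
    (Pk : S → A → S → ℝ)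
    (hP0 : ∀ s a s', 0 ≤ Pk s a s') (hP1 : ∀ s a, ∑ s', Pk s a s' = 1)
    (rk : S × A → ℝ) (γ : ℝ) (hγ0 : 0 ≤ γ) (hγ1 : γ < 1)
    (k : ℕ) (hk : 1 ≤ k)
    (Pop : (S → A) → (S × A → ℝ) → (S × A → ℝ))
    (hPop : ∀ p f sa, Pop p f sa = ∑ s', Pk sa.1 sa.2 s' * f (s', p s'))
    (Tk : (S → A) → (S × A → ℝ) → (S × A → ℝ))
    (hTk : ∀ p f, Tk p f = rk + γ ^ k • Pop p f)
    (Tstark : (S × A → ℝ) → (S × A → ℝ))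
    (hTstark : ∀ f sa, Tstark f sa =
      rk sa + γ ^ k * ∑ s', Pk sa.1 sa.2 s' *
        (Finset.univ.sup' Finset.univ_nonempty fun a' => f (s', a')))
    (Qstark : S × A → ℝ) (hQstark : Tstark Qstark = Qstark)
    (πstar : S → A) (hπstar : ∀ s a, Qstark (s, a) ≤ Qstark (s, πstar s))
    (QJ : S × A → ℝ) (πJ : S → A) (hπJ : ∀ s a, QJ (s, a) ≤ QJ (s, πJ s))
    (QkπJ : S × A → ℝ) (hQkπJ : Tk πJ QkπJ = QkπJ) :
    ∀ x : S × A,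
      Qstark x - QkπJ x ≤
        γ ^ k * (∑' m : ℕ, γ ^ (k * m) •
          (Pop πJ)^[m] (Pop πstar (Qstark - QJ) - Pop πJ (Qstark - QJ))) x := by
  rcases isEmpty_or_nonempty S with hS | hS
  · intro x; exact (IsEmpty.false x.1).elim
  intro x
  have hSA : Nonempty (S × A) := inferInstance
  set γk := γ ^ k with hγk
  have hγk0 : 0 ≤ γk := pow_nonneg hγ0 k
  have hγk1 : γk < 1 := pow_lt_one₀ hγ0 hγ1 (by omega)
  set E : S × A → ℝ := Pop πstar (Qstark - QJ) - Pop πJ (Qstark - QJ) with hE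
  set P : (S × A → ℝ) → (S × A → ℝ) := Pop πJ with hPdef
  -- basic properties of Pop
  have hmono : ∀ (p : S → A) (f g : S × A → ℝ), (∀ y, f y ≤ g y) →
      ∀ y, Pop p f y ≤ Pop p g y := by
    intro p f g h y
    rw [hPop, hPop]
    exact Finset.sum_le_sum fun s' _ => mul_le_mul_of_nonneg_left (h _) (hP0 _ _ _)
  have hbound : ∀ (p : S → A) (f : S × A → ℝ) (M : ℝ), (∀ y, |f y| ≤ M) →
      ∀ y, |Pop p f y| ≤ M := by
    intro p f M h y
    rw [hPop]
    calc |∑ s', Pk y.1 y.2 s' * f (s', p s')|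
        ≤ ∑ s', |Pk y.1 y.2 s' * f (s', p s')| := Finset.abs_sum_le_sum_abs _ _
      _ ≤ ∑ s', Pk y.1 y.2 s' * M := by
          refine Finset.sum_le_sum fun s' _ => ?_
          rw [abs_mul, abs_of_nonneg (hP0 _ _ _)]
          exact mul_le_mul_of_nonneg_left (h _) (hP0 _ _ _)
      _ = M := by rw [← Finset.sum_mul, hP1, one_mul]
  have hsub : ∀ (p : S → A) (f g : S × A → ℝ) y,
      Pop p (f - g) y = Pop p f y - Pop p g y := by
    intro p f g y
    rw [hPop, hPop, hPop, ← Finset.sum_sub_distrib]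
    exact Finset.sum_congr rfl fun s' _ => by simp [mul_sub]
  have hsmul : ∀ (p : S → A) (c : ℝ) (f : S × A → ℝ) y,
      Pop p (c • f) y = c * Pop p f y := by
    intro p c f y
    rw [hPop, hPop, Finset.mul_sum]
    exact Finset.sum_congr rfl fun s' _ => by simp [mul_left_comm]
  -- fixed point equations
  have hQs : ∀ y, Qstark y = rk y + γk * Pop πstar Qstark y := by
    intro y
    conv_lhs => rw [← hQstark]
    rw [hTstark, hPop]
    congr 2
    refine Finset.sum_congr rfl fun s' _ => ?_
    congr 1
    refine le_antisymm (Finset.sup'_le _ _ fun a _ => hπstar s' a) ?_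
    exact Finset.le_sup' (fun a' => Qstark (s', a')) (Finset.mem_univ (πstar s'))
  have hQJfix : ∀ y, QkπJ y = rk y + γk * P QkπJ y := by
    intro y
    conv_lhs => rw [← hQkπJ]
    rw [hTk]
    simp [smul_eq_mul, hPdef]
  -- key one-step inequality
  have key : ∀ y, Qstark y - QkπJ y ≤ γk * E y + γk * P (Qstark - QkπJ) y := by
    intro y
    have h1 : Pop πstar QJ y ≤ P QJ y := by
      rw [hPdef, hPop, hPop]
      exact Finset.sum_le_sum fun s' _ =>
        mul_le_mul_of_nonneg_left (hπJ s' (πstar s')) (hP0 _ _ _)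
    have h2 : Pop πstar Qstark y - P Qstark y ≤ E y := by
      have hsubP : ∀ (f g : S × A → ℝ) z, P (f - g) z = P f z - P g z := by
        intro f g z; rw [hPdef]; exact hsub πJ f g z
      rw [hE]
      simp only [Pi.sub_apply]
      rw [hsub, hsubP]
      linarith
    have h3 : P (Qstark - QkπJ) y = P Qstark y - P QkπJ y := hsub _ _ _ _
    have h4 : Qstark y - QkπJ y = γk * (Pop πstar Qstark y - P QkπJ y) := by
      rw [hQs y, hQJfix y]; ring
    rw [h4, h3]
    nlinarith [hγk0, h2]
  -- iterated bound
  have hiterbound : ∀ (f : S × A → ℝ) (M : ℝ), (∀ y, |f y| ≤ M) →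
      ∀ (m : ℕ) y, |P^[m] f y| ≤ M := by
    intro f M h m
    induction m with
    | zero => simpa using h
    | succ n ih =>
        intro y
        rw [Function.iterate_succ_apply']
        exact hbound _ _ _ ih y
  set ME : ℝ := Finset.univ.sup' (Finset.univ_nonempty (α := S × A)) (fun y => |E y|)
    with hME
  have hMEb : ∀ y, |E y| ≤ ME := fun y =>
    Finset.le_sup' (fun y => |E y|) (Finset.mem_univ y)
  have hEm : ∀ m y, |P^[m] E y| ≤ ME := hiterbound E ME hMEb
  -- summability
  set g : ℕ → S × A → ℝ := fun m y => γk ^ m * P^[m] E y with hg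
  have hg_sum : ∀ y, Summable fun m => g m y := by
    intro y
    refine Summable.of_abs ?_
    refine Summable.of_nonneg_of_le (fun m => abs_nonneg _) (fun m => ?_)
      ((summable_geometric_of_lt_one hγk0 hγk1).mul_left ME)
    rw [hg, abs_mul, abs_pow, abs_of_nonneg hγk0]
    calc γk ^ m * |P^[m] E y| ≤ γk ^ m * ME :=
          mul_le_mul_of_nonneg_left (hEm m y) (pow_nonneg hγk0 m)
      _ = ME * γk ^ m := mul_comm _ _
  set F : S × A → ℝ := fun y => ∑' m, g m y with hF
  -- recursion for F
  have hFrec : ∀ y, F y = E y + γk * P F y := by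
    intro y
    have hPF : P F y = ∑' m, ∑ s', Pk y.1 y.2 s' * g m (s', πJ s') := by
      rw [hPdef, hPop]
      have hc : ∀ s' : S, Pk y.1 y.2 s' * F (s', πJ s')
          = ∑' m, Pk y.1 y.2 s' * g m (s', πJ s') := by
        intro s'
        simp only [hF]
        exact tsum_mul_left.symm
      rw [Finset.sum_congr rfl fun s' _ => hc s']
      exact (Summable.tsum_finsetSum fun s' _ => (hg_sum (s', πJ s')).mul_left (Pk y.1 y.2 s')).symm
    have hterm : ∀ m : ℕ, ∑ s', Pk y.1 y.2 s' * g m (s', πJ s')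
        = γk ^ m * P^[m.succ] E y := by
      intro m
      rw [Function.iterate_succ_apply', hPdef, hPop, Finset.mul_sum]
      exact Finset.sum_congr rfl fun s' _ => by rw [hg]; ring
    have h5 : γk * P F y = ∑' m, g (m + 1) y := by
      rw [hPF]
      rw [← tsum_mul_left]
      refine tsum_congr fun m => ?_
      rw [hterm m, hg]
      simp only [Function.iterate_succ_apply']
      ring
    rw [hF]
    simp only
    rw [Summable.tsum_eq_zero_add (hg_sum y), h5, hg]
    simp
  -- H := γk • F - (Qstark - QkπJ) is a supersolution
  set H : S × A → ℝ := γk • F - (Qstark - QkπJ) with hH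
  have hHrec : ∀ y, γk * P H y ≤ H y := by
    intro y
    have hPH : P H y = γk * P F y - P (Qstark - QkπJ) y := by
      rw [hH, hPdef, hsub, hsmul]
    have hFy := hFrec y
    have hky := key y
    have : H y = γk * F y - (Qstark y - QkπJ y) := by simp [hH]
    rw [hPH]
    nlinarith [hγk0]
  have hHn : ∀ (n : ℕ) y, γk ^ n * P^[n] H y ≤ H y := by
    intro n
    induction n with
    | zero => intro y; simp
    | succ n ih =>
        intro y
        have h6 : P (γk ^ n • P^[n] H) y ≤ P H y := by
          refine hmono πJ _ _ (fun z => ?_) y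
          simpa [smul_eq_mul] using ih z
        have h7 : P (γk ^ n • P^[n] H) y = γk ^ n * P (P^[n] H) y := hsmul _ _ _ _
        have h8 : γk ^ (n + 1) * P^[n + 1] H y = γk * (γk ^ n * P (P^[n] H) y) := by
          rw [Function.iterate_succ_apply']; ring
        calc γk ^ (n + 1) * P^[n + 1] H y = γk * (γk ^ n * P (P^[n] H) y) := h8
          _ = γk * P (γk ^ n • P^[n] H) y := by rw [h7]
          _ ≤ γk * P H y := mul_le_mul_of_nonneg_left h6 hγk0
          _ ≤ H y := hHrec y
  -- H ≥ 0
  have hHpos : ∀ y, 0 ≤ H y := by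
    intro y
    set MH : ℝ := Finset.univ.sup' (Finset.univ_nonempty (α := S × A)) (fun z => |H z|)
      with hMH
    have hMHb : ∀ z, |H z| ≤ MH := fun z =>
      Finset.le_sup' (fun z => |H z|) (Finset.mem_univ z)
    have hHm : ∀ n z, |P^[n] H z| ≤ MH := hiterbound H MH hMHb
    have hle : ∀ n : ℕ, -H y ≤ MH * γk ^ n := by
      intro n
      have := hHn n y
      have habs := (abs_le.mp (hHm n y)).1
      nlinarith [pow_nonneg hγk0 n]
    have htend : Filter.Tendsto (fun n : ℕ => MH * γk ^ n) Filter.atTop (nhds 0) := by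
      simpa using (tendsto_pow_atTop_nhds_zero_of_lt_one hγk0 hγk1).const_mul MH
    have : -H y ≤ 0 := ge_of_tendsto' htend hle
    linarith
  -- conclude
  have hfinal : Qstark x - QkπJ x ≤ γk * F x := by
    have := hHpos x
    simp only [hH, Pi.sub_apply, Pi.smul_apply, smul_eq_mul] at this
    linarith
  refine hfinal.trans (le_of_eq ?_)
  have hsummF : Summable fun m : ℕ => γ ^ (k * m) • P^[m] E := by
    rw [Pi.summable]
    intro y
    have := hg_sum y
    refine this.congr fun m => ?_
    rw [hg]
    simp [pow_mul, smul_eq_mul, hγk]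
  rw [tsum_apply hsummF]
  rw [hF]
  simp only
  congr 1
  refine tsum_congr fun m => ?_
  rw [hg]
  simp only [Pi.smul_apply, smul_eq_mul, pow_mul]
  rw [hγk]
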